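/- Let (Y, τ') be a subspace of a topological space (X, τ) with Y both open and closed in X. Then (Y, τ') is WS-supernormal in X if and only if (Y, τ') is strongly normal in X. -/

import Mathlib

/-- `Y` is WS-supernormal in `X`. -/
def WSSupernormalIn {X : Type*} (t : TopologicalSpace X) (Y : Set X) : Prop :=
  ∀ A B : Set X, A ⊆ Y →
    @IsClosed _ (TopologicalSpace.induced (Subtype.val : Y → X) t)
      ((Subtype.val : Y → X) ⁻¹' A) →
    @IsClosed X t B → A ∩ B = ∅ →
    ∃ U V : Set X, U ⊆ Y ∧
      @IsOpen _ (TopologicalSpace.induced (Subtype.val : Y → X) t)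
        ((Subtype.val : Y → X) ⁻¹' U) ∧
      @IsOpen X t V ∧ A ⊆ U ∧ B ⊆ V ∧ U ∩ V = ∅

/-- `Y` is strongly normal in `X`. -/
def StronglyNormalIn {X : Type*} (t : TopologicalSpace X) (Y : Set X) : Prop :=
  ∀ A B : Set X, A ⊆ Y → B ⊆ Y →
    @IsClosed _ (TopologicalSpace.induced (Subtype.val : Y → X) t)
      ((Subtype.val : Y → X) ⁻¹' A) →
    @IsClosed _ (TopologicalSpace.induced (Subtype.val : Y → X) t)
      ((Subtype.val : Y → X) ⁻¹' B) →
    A ∩ B = ∅ →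
    ∃ U V : Set X, @IsOpen X t U ∧ @IsOpen X t V ∧ A ⊆ U ∧ B ⊆ V ∧ U ∩ V = ∅

lemma sub_eq {X : Type*} (Y : Set X) (A C : Set X) (hA : A ⊆ Y)
    (h : (Subtype.val : Y → X) ⁻¹' C = (Subtype.val : Y → X) ⁻¹' A) :
    A = Y ∩ C := by
  ext x
  constructor
  · intro hx
    refine ⟨hA hx, ?_⟩
    have : (⟨x, hA hx⟩ : Y) ∈ (Subtype.val : Y → X) ⁻¹' C := by rw [h]; exact hx
    exact this
  · rintro ⟨hxY, hxC⟩
    have : (⟨x, hxY⟩ : Y) ∈ (Subtype.val : Y → X) ⁻¹' A := by rw [← h]; exact hxC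
    exact this

lemma closed_of_sub {X : Type*} {t : TopologicalSpace X} {Y : Set X}
    (hclosed : @IsClosed X t Y) (A : Set X) (hA : A ⊆ Y)
    (h : @IsClosed _ (TopologicalSpace.induced (Subtype.val : Y → X) t)
      ((Subtype.val : Y → X) ⁻¹' A)) : @IsClosed X t A := by
  obtain ⟨C, hC, hCA⟩ := isClosed_induced_iff.mp h
  rw [sub_eq Y A C hA hCA]
  exact hclosed.inter hC

lemma open_of_sub {X : Type*} {t : TopologicalSpace X} {Y : Set X}
    (hopen : @IsOpen X t Y) (U : Set X) (hU : U ⊆ Y)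
    (h : @IsOpen _ (TopologicalSpace.induced (Subtype.val : Y → X) t)
      ((Subtype.val : Y → X) ⁻¹' U)) : @IsOpen X t U := by
  obtain ⟨C, hC, hCU⟩ := isOpen_induced_iff.mp h
  rw [sub_eq Y U C hU hCU]
  exact hopen.inter hC

theorem stmt7 {X : Type*} (t : TopologicalSpace X) (Y : Set X)
    (hopen : @IsOpen X t Y) (hclosed : @IsClosed X t Y) :
    WSSupernormalIn t Y ↔ StronglyNormalIn t Y := by
  constructor
  · intro hws A B hA hB hAc hBc hAB
    obtain ⟨U, V, hUY, hUo, hVo, hAU, hBV, hUV⟩ :=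
      hws A B hA hAc (closed_of_sub hclosed B hB hBc) hAB
    exact ⟨U, V, open_of_sub hopen U hUY hUo, hVo, hAU, hBV, hUV⟩
  · intro hsn A B hA hAc hBc hAB
    have hBY : B ∩ Y ⊆ Y := Set.inter_subset_right
    have hBYc : @IsClosed _ (TopologicalSpace.induced (Subtype.val : Y → X) t)
        ((Subtype.val : Y → X) ⁻¹' (B ∩ Y)) := by
      refine isClosed_induced_iff.mpr ⟨B, hBc, ?_⟩
      ext x; simp [x.2]
    have hABY : A ∩ (B ∩ Y) = ∅ := by
      rw [← Set.inter_assoc, hAB]; simp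
    obtain ⟨U, V, hUo, hVo, hAU, hBV, hUV⟩ := hsn A (B ∩ Y) hA hBY hAc hBYc hABY
    refine ⟨U ∩ Y, V ∪ Yᶜ, Set.inter_subset_right, ?_, hVo.union hclosed.isOpen_compl, ?_, ?_, ?_⟩
    · exact isOpen_induced_iff.mpr ⟨U, hUo, by ext x; simp [x.2]⟩
    · exact Set.subset_inter hAU hA
    · intro x hx
      by_cases hxY : x ∈ Y
      · exact Or.inl (hBV ⟨hx, hxY⟩)
      · exact Or.inr hxY
    · ext x
      simp only [Set.mem_inter_iff, Set.mem_union, Set.mem_compl_iff, Set.mem_empty_iff_false,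
        iff_false, not_and]
      rintro ⟨hxU, hxY⟩ (hxV | hxYc)
      · exact Set.eq_empty_iff_forall_notMem.mp hUV x ⟨hxU, hxV⟩
      · exact hxYc hxY
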